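/- BH with marginally super-uniform p-values under independence controls a marginal FDR-type quantity: let p₁,…,p_m be independent random variables, each paired with a random null indicator H_j ∈ {0,1}, such that P(p_j ≤ t, H_j = 1) ≤ t for all t ∈ [0,1] and all j, and suppose (p_j, H_j) are jointly independent across j. Let R = max{k : p_(k) ≤ αk/m} and S = {j : p_j ≤ αR/m} be the BH rejection set at level α. Then E[ |{j ∈ S : H_j = 1}| / max(1, |S|) ] ≤ α. -/

import Mathlib

open MeasureTheory ProbabilityTheory

/-- The number of rejections of the Benjamini–Hochberg procedure at level `α` applied to
`m` p-values: the largest `k ≤ m` such that at least `k` of the p-values are `≤ αk/m`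
(equivalently, `max{k : p_(k) ≤ αk/m}`). -/
noncomputable def BHnum (m : ℕ) (α : ℝ) (p : Fin m → ℝ) : ℕ :=
  ((Finset.range (m + 1)).filter
    (fun k : ℕ => k ≤ (Finset.univ.filter (fun j : Fin m => p j ≤ α * (k : ℝ) / m)).card)).max'
    ⟨0, by simp⟩

/-- The Benjamini–Hochberg rejection set `S = {j : p_j ≤ α R / m}` with `R = BHnum`. -/
noncomputable def BHset (m : ℕ) (α : ℝ) (p : Fin m → ℝ) : Finset (Fin m) :=
  Finset.univ.filter (fun j => p j ≤ α * (BHnum m α p) / m)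

section BHaux

variable {m : ℕ} {α : ℝ}

lemma BHnum_mem (p : Fin m → ℝ) :
    BHnum m α p ∈ (Finset.range (m + 1)).filter
      (fun k : ℕ => k ≤ (Finset.univ.filter (fun j : Fin m => p j ≤ α * (k : ℝ) / m)).card) :=
  Finset.max'_mem _ _

lemma BHnum_le (p : Fin m → ℝ) : BHnum m α p ≤ m := by
  have h := BHnum_mem (α := α) p
  simp only [Finset.mem_filter, Finset.mem_range] at h
  omega

lemma BHnum_feas (p : Fin m → ℝ) :
    BHnum m α p ≤ (Finset.univ.filter
      (fun j : Fin m => p j ≤ α * (BHnum m α p : ℝ) / m)).card := by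
  have h := BHnum_mem (α := α) p
  simp only [Finset.mem_filter, Finset.mem_range] at h
  exact h.2

lemma le_BHnum (p : Fin m → ℝ) (k : ℕ) (hk : k ≤ m)
    (h : k ≤ (Finset.univ.filter (fun j : Fin m => p j ≤ α * (k : ℝ) / m)).card) :
    k ≤ BHnum m α p :=
  Finset.le_max' _ _ (by
    simp only [Finset.mem_filter, Finset.mem_range]
    exact ⟨by omega, h⟩)

lemma cnt_mono (p : Fin m → ℝ) {t t' : ℝ} (h : t ≤ t') :
    (Finset.univ.filter (fun j : Fin m => p j ≤ t)).card
      ≤ (Finset.univ.filter (fun j : Fin m => p j ≤ t')).card := by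
  apply Finset.card_le_card
  intro i hi
  simp only [Finset.mem_filter, Finset.mem_univ, true_and] at hi ⊢
  exact hi.trans h

lemma card_BHset (hm : 0 < m) (hα0 : 0 ≤ α) (p : Fin m → ℝ) :
    (BHset m α p).card = BHnum m α p := by
  have h1 : BHnum m α p ≤ (BHset m α p).card := BHnum_feas p
  have h2 : (BHset m α p).card ≤ m := by
    simpa [BHset] using Finset.card_filter_le (Finset.univ : Finset (Fin m)) _
  refine le_antisymm ?_ h1
  refine le_BHnum p _ h2 ?_
  have hmR : (0:ℝ) < m := by exact_mod_cast hm
  calc (BHset m α p).card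
      = (Finset.univ.filter (fun j : Fin m => p j ≤ α * (BHnum m α p : ℝ) / m)).card := rfl
    _ ≤ _ := cnt_mono p ((div_le_div_iff_of_pos_right hmR).mpr
        (mul_le_mul_of_nonneg_left (by exact_mod_cast h1) hα0))

lemma R_le_Rj (hα0 : 0 ≤ α) (p : Fin m → ℝ) (j : Fin m) :
    BHnum m α p ≤ BHnum m α (fun i => if i = j then 0 else p i) := by
  refine le_BHnum _ _ (BHnum_le p) (le_trans (BHnum_feas p) (Finset.card_le_card ?_))
  intro i hi
  simp only [Finset.mem_filter, Finset.mem_univ, true_and] at hi ⊢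
  by_cases h : i = j
  · simp only [h, if_pos rfl]
    exact div_nonneg (mul_nonneg hα0 (Nat.cast_nonneg _)) (Nat.cast_nonneg _)
  · simpa [h] using hi

lemma one_le_Rj (hm : 0 < m) (hα0 : 0 < α) (p : Fin m → ℝ) (j : Fin m) :
    1 ≤ BHnum m α (fun i => if i = j then 0 else p i) := by
  refine le_BHnum _ _ hm ?_
  have : j ∈ Finset.univ.filter
      (fun i : Fin m => (if i = j then 0 else p i) ≤ α * ((1:ℕ) : ℝ) / m) := by
    simp only [Finset.mem_filter, Finset.mem_univ, true_and, if_pos rfl]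
    positivity
  exact Finset.card_pos.mpr ⟨j, this⟩

lemma Rj_le_R (p : Fin m → ℝ) (j : Fin m)
    (h : p j ≤ α * (BHnum m α (fun i => if i = j then 0 else p i) : ℝ) / m) :
    BHnum m α (fun i => if i = j then 0 else p i) ≤ BHnum m α p := by
  set q := fun i => if i = j then 0 else p i with hq
  refine le_BHnum _ _ (BHnum_le q) (le_trans (BHnum_feas q) (Finset.card_le_card ?_))
  intro i hi
  simp only [Finset.mem_filter, Finset.mem_univ, true_and] at hi ⊢
  by_cases hij : i = j
  · subst hij; exact h
  · simpa [hq, hij] using hi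

lemma pointwise_term (hm : 0 < m) (hα0 : 0 < α) (p : Fin m → ℝ) (j : Fin m) (b : Bool) :
    (if p j ≤ α * (BHnum m α p : ℝ) / m ∧ b = true then (1:ℝ) else 0)
        / max 1 ((BHnum m α p : ℝ))
      = (if p j ≤ α * (BHnum m α (fun i => if i = j then 0 else p i) : ℝ) / m ∧ b = true
          then (1:ℝ) else 0) / (BHnum m α (fun i => if i = j then 0 else p i) : ℝ) := by
  have hmR : (0:ℝ) < m := by exact_mod_cast hm
  set R := BHnum m α p with hR
  set Rj := BHnum m α (fun i => if i = j then 0 else p i) with hRjdef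
  by_cases hpj : p j ≤ α * (Rj : ℝ) / m
  · have hle : Rj ≤ R := Rj_le_R p j hpj
    have hge : R ≤ Rj := R_le_Rj hα0.le p j
    have hRR : R = Rj := le_antisymm hge hle
    have h1 : 1 ≤ Rj := one_le_Rj hm hα0 p j
    rw [hRR, max_eq_right (by exact_mod_cast h1 : (1:ℝ) ≤ (Rj:ℝ))]
  · have hpj' : ¬ (p j ≤ α * (R : ℝ) / m) := by
      intro hc
      exact hpj (hc.trans ((div_le_div_iff_of_pos_right hmR).mpr
        (mul_le_mul_of_nonneg_left (by exact_mod_cast R_le_Rj hα0.le p j) hα0.le)))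
    simp [hpj, hpj']

lemma measurable_cnt (t : ℝ) :
    Measurable (fun q : Fin m → ℝ =>
      (Finset.univ.filter (fun j : Fin m => q j ≤ t)).card) := by
  simp only [Finset.card_filter]
  apply Finset.measurable_sum
  intro j _
  exact Measurable.ite (measurableSet_le (measurable_pi_apply j) measurable_const)
    measurable_const measurable_const

lemma BHnum_eq_iff (p : Fin m → ℝ) (k : ℕ) :
    BHnum m α p = k ↔
      (k ≤ m ∧ k ≤ (Finset.univ.filter (fun j : Fin m => p j ≤ α * (k : ℝ) / m)).card)
      ∧ ∀ l : ℕ, l ≤ m →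
          l ≤ (Finset.univ.filter (fun j : Fin m => p j ≤ α * (l : ℝ) / m)).card → l ≤ k := by
  constructor
  · rintro rfl
    refine ⟨⟨BHnum_le p, BHnum_feas p⟩, fun l hl hc => le_BHnum p l hl hc⟩
  · rintro ⟨⟨hk, hc⟩, hall⟩
    refine le_antisymm (Finset.max'_le _ _ _ ?_) (le_BHnum p k hk hc)
    intro b hb
    simp only [Finset.mem_filter, Finset.mem_range] at hb
    exact hall b (by omega) hb.2

lemma measurable_BHnum : Measurable (BHnum m α) := by
  apply measurable_to_countable'
  intro k
  have hset : BHnum m α ⁻¹' {k} =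
      ({q : Fin m → ℝ | k ≤ m} ∩
        ((fun q : Fin m → ℝ =>
            (Finset.univ.filter (fun j : Fin m => q j ≤ α * (k : ℝ) / m)).card) ⁻¹'
          {n : ℕ | k ≤ n})) ∩
      ⋂ l : ℕ, ((fun q : Fin m → ℝ =>
            (Finset.univ.filter (fun j : Fin m => q j ≤ α * (l : ℝ) / m)).card) ⁻¹'
          {n : ℕ | l ≤ m → l ≤ n → l ≤ k}) := by
    ext q
    simp only [Set.mem_preimage, Set.mem_singleton_iff, Set.mem_inter_iff, Set.mem_setOf_eq,
      Set.mem_iInter, BHnum_eq_iff]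
    try tauto
  rw [hset]
  refine (MeasurableSet.inter ?_ ?_).inter (MeasurableSet.iInter fun l => ?_)
  · by_cases h : k ≤ m <;> simp [h]
  · exact measurable_cnt _ ((Set.to_countable _).measurableSet)
  · exact measurable_cnt _ ((Set.to_countable _).measurableSet)

end BHaux

/-- BH with marginally super-uniform p-values under independence controls a
marginal FDR-type quantity: if the pairs `(p_j, H_j)` are jointly independent across `j` and
`P(p_j ≤ t, H_j = 1) ≤ t` for all `t ∈ [0,1]`, then the BH rejection set `S` at level `α`
satisfies `E[|{j ∈ S : H_j = 1}| / max(1, |S|)] ≤ α`. -/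
theorem bh_marginal_fdr_control
    {Ω : Type*} [MeasurableSpace Ω] (μ : Measure Ω) [IsProbabilityMeasure μ]
    (m : ℕ) (hm : 0 < m) (α : ℝ) (hα : α ∈ Set.Ioo (0:ℝ) 1)
    (p : Fin m → Ω → ℝ) (H : Fin m → Ω → Bool)
    (hp : ∀ j, Measurable (p j)) (hH : ∀ j, Measurable (H j))
    (hindep : iIndepFun (fun j ω => (p j ω, H j ω)) μ)
    (hsuper : ∀ j, ∀ t ∈ Set.Icc (0:ℝ) 1,
      μ {ω | p j ω ≤ t ∧ H j ω = true} ≤ ENNReal.ofReal t) :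
    ∫ ω, (((BHset m α (fun j => p j ω)).filter (fun j => H j ω = true)).card : ℝ)
        / max 1 (((BHset m α (fun j => p j ω)).card : ℝ)) ∂μ ≤ α := by
  obtain ⟨hα0, hα1⟩ := hα
  have hmR : (0:ℝ) < m := by exact_mod_cast hm
  set Rj : Fin m → Ω → ℕ := fun j ω => BHnum m α (fun i => if i = j then 0 else p i ω) with hRj
  have hRjmeas : ∀ j, Measurable (Rj j) := by
    intro j
    apply measurable_BHnum.comp
    apply measurable_pi_lambda
    intro i
    by_cases h : i = j
    · simp only [h, if_pos rfl]; exact measurable_const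
    · simp only [if_neg h]; exact hp i
  set g : Fin m → ℕ → Ω → ℝ := fun j k ω =>
    if (Rj j ω = k ∧ p j ω ≤ α * (k:ℝ) / m ∧ H j ω = true) then ((k:ℝ))⁻¹ else 0 with hg
  have hAmeas : ∀ j k, MeasurableSet {ω | Rj j ω = k} :=
    fun j k => hRjmeas j (measurableSet_singleton k)
  have hBmeas : ∀ j (c : ℝ), MeasurableSet {ω | p j ω ≤ c ∧ H j ω = true} := by
    intro j c
    rw [Set.setOf_and]
    exact ((hp j) measurableSet_Iic).inter ((hH j) (measurableSet_singleton true))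
  have hgind : ∀ j k, g j k = Set.indicator
      ({ω | Rj j ω = k} ∩ {ω | p j ω ≤ α * (k:ℝ)/m ∧ H j ω = true})
      (fun _ => ((k:ℝ))⁻¹) := by
    intro j k
    funext ω
    by_cases h : Rj j ω = k ∧ p j ω ≤ α * (k:ℝ)/m ∧ H j ω = true <;>
      simp [hg, Set.indicator_apply, Set.mem_inter_iff, Set.mem_setOf_eq, h]
  have hgint : ∀ j k, Integrable (g j k) μ := by
    intro j k
    rw [hgind]
    exact (integrable_const _).indicator ((hAmeas j k).inter (hBmeas j _))
  have hmul : ∀ (j : Fin m) (k : ℕ) (c : ℝ),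
      μ ({ω | Rj j ω = k} ∩ {ω | p j ω ≤ c ∧ H j ω = true})
        = μ {ω | Rj j ω = k} * μ {ω | p j ω ≤ c ∧ H j ω = true} := by
    intro j k c
    have hXm : ∀ i : Fin m, Measurable (fun ω => (p i ω, H i ω)) :=
      fun i => (hp i).prodMk (hH i)
    have hbase := hindep.indepFun_finset ({j}ᶜ : Finset (Fin m)) {j}
      disjoint_compl_left hXm
    set φ : ((({j}ᶜ : Finset (Fin m)) : Finset (Fin m)) → ℝ × Bool) → ℕ := fun v =>
      BHnum m α (fun i => if h : i = j then 0
        else (v ⟨i, by simp [Finset.mem_compl, h]⟩).1) with hφ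
    have hφm : Measurable φ := by
      apply measurable_BHnum.comp
      apply measurable_pi_lambda
      intro i
      by_cases h : i = j
      · simp only [dif_pos h]; exact measurable_const
      · simp only [dif_neg h]
        exact measurable_fst.comp (measurable_pi_apply _)
    have hψm : Measurable (fun v : ((({j} : Finset (Fin m)) : Finset (Fin m)) → ℝ × Bool) =>
        v ⟨j, Finset.mem_singleton_self j⟩) := measurable_pi_apply _
    have hcomp := hbase.comp hφm hψm
    have h1 : (φ ∘ fun ω (i : ({j}ᶜ : Finset (Fin m))) => (p (i : Fin m) ω, H (i : Fin m) ω))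
        = Rj j := by
      funext ω
      simp only [Function.comp_apply, hφ, hRj]
      exact congrArg (BHnum m α) (funext fun i => by by_cases h : i = j <;> simp [h])
    have h2 : ((fun v : ((({j} : Finset (Fin m)) : Finset (Fin m)) → ℝ × Bool) =>
          v ⟨j, Finset.mem_singleton_self j⟩) ∘
        fun ω (i : ({j} : Finset (Fin m))) => (p (i : Fin m) ω, H (i : Fin m) ω))
        = fun ω => (p j ω, H j ω) := rfl
    rw [h1, h2] at hcomp
    have hres := hcomp.measure_inter_preimage_eq_mul {k} (Set.Iic c ×ˢ ({true} : Set Bool))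
      (measurableSet_singleton k) (measurableSet_Iic.prod (measurableSet_singleton true))
    have e1 : (Rj j) ⁻¹' {k} = {ω | Rj j ω = k} := rfl
    have e2 : (fun ω => (p j ω, H j ω)) ⁻¹' (Set.Iic c ×ˢ ({true} : Set Bool))
        = {ω | p j ω ≤ c ∧ H j ω = true} := rfl
    rwa [e1, e2] at hres
  have hbound : ∀ (j : Fin m), ∀ k ∈ Finset.range (m+1),
      ∫ ω, g j k ω ∂μ ≤ (μ {ω | Rj j ω = k}).toReal * (α / m) := by
    intro j k hk
    rw [hgind, integral_indicator_const _ ((hAmeas j k).inter (hBmeas j _))]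
    rcases Nat.eq_zero_or_pos k with rfl | hkpos
    · simp only [Nat.cast_zero, inv_zero, smul_zero]
      positivity
    · have hkR : (0:ℝ) < k := by exact_mod_cast hkpos
      have hkm : k ≤ m := by
        simp only [Finset.mem_range] at hk; omega
      have ht0 : (0:ℝ) ≤ α * k / m := by positivity
      have ht1 : α * k / m ≤ 1 := by
        have h1 : α * (k:ℝ) / m ≤ α * (m:ℝ) / m := by
          apply (div_le_div_iff_of_pos_right hmR).mpr
          exact mul_le_mul_of_nonneg_left (by exact_mod_cast hkm) hα0.le
        have h2 : α * (m:ℝ) / m = α := by field_simp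
        linarith
      have hμB := hsuper j (α * k / m) ⟨ht0, ht1⟩
      rw [measureReal_def, hmul, smul_eq_mul, ENNReal.toReal_mul]
      have hBle : (μ {ω | p j ω ≤ α * (k:ℝ)/m ∧ H j ω = true}).toReal ≤ α * k / m := by
        refine le_trans (ENNReal.toReal_mono ENNReal.ofReal_ne_top hμB) ?_
        rw [ENNReal.toReal_ofReal ht0]
      calc (μ {ω | Rj j ω = k}).toReal
            * (μ {ω | p j ω ≤ α * (k:ℝ)/m ∧ H j ω = true}).toReal * ((k:ℝ))⁻¹
          ≤ (μ {ω | Rj j ω = k}).toReal * (α * k / m) * ((k:ℝ))⁻¹ := by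
            apply mul_le_mul_of_nonneg_right ?_ (by positivity)
            exact mul_le_mul_of_nonneg_left hBle ENNReal.toReal_nonneg
        _ = (μ {ω | Rj j ω = k}).toReal * (α / m) := by
            field_simp
  have hsumj : ∀ j : Fin m, ∑ k ∈ Finset.range (m+1), ∫ ω, g j k ω ∂μ ≤ α / m := by
    intro j
    calc ∑ k ∈ Finset.range (m+1), ∫ ω, g j k ω ∂μ
        ≤ ∑ k ∈ Finset.range (m+1), (μ {ω | Rj j ω = k}).toReal * (α / m) :=
          Finset.sum_le_sum (hbound j)
      _ = (∑ k ∈ Finset.range (m+1), (μ {ω | Rj j ω = k}).toReal) * (α / m) := by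
          rw [Finset.sum_mul]
      _ ≤ 1 * (α / m) := by
          refine mul_le_mul_of_nonneg_right ?_ (by positivity)
          have hdisj : (↑(Finset.range (m+1)) : Set ℕ).Pairwise
              (Function.onFun Disjoint fun k => {ω | Rj j ω = k}) := by
            intro a _ b _ hab
            simp only [Function.onFun]
            rw [Set.disjoint_left]
            rintro ω h1 h2
            simp only [Set.mem_setOf_eq] at h1 h2
            exact hab (h1.symm.trans h2)
          have hsum : (∑ k ∈ Finset.range (m+1), μ {ω | Rj j ω = k}) ≤ 1 := by
            rw [← measure_biUnion_finset hdisj (fun k _ => hAmeas j k)]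
            exact prob_le_one
          calc ∑ k ∈ Finset.range (m+1), (μ {ω | Rj j ω = k}).toReal
              = (∑ k ∈ Finset.range (m+1), μ {ω | Rj j ω = k}).toReal :=
                (ENNReal.toReal_sum (fun a _ => measure_ne_top μ _)).symm
            _ ≤ (1:ENNReal).toReal := ENNReal.toReal_mono (by simp) hsum
            _ = 1 := by simp
      _ = α / m := one_mul _
  have hpt : ∀ ω : Ω, (((BHset m α (fun j => p j ω)).filter (fun j => H j ω = true)).card : ℝ)
        / max 1 (((BHset m α (fun j => p j ω)).card : ℝ))
      = ∑ j : Fin m, ∑ k ∈ Finset.range (m+1), g j k ω := by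
    intro ω
    rw [card_BHset hm hα0.le]
    have hnum : (((BHset m α (fun j => p j ω)).filter (fun j => H j ω = true)).card : ℝ)
        = ∑ j : Fin m, (if p j ω ≤ α * ((BHnum m α (fun i => p i ω) : ℕ) : ℝ) / m
            ∧ H j ω = true then (1:ℝ) else 0) := by
      rw [BHset, Finset.filter_filter, Finset.card_filter]
      push_cast
      rfl
    rw [hnum, Finset.sum_div]
    refine Finset.sum_congr rfl fun j _ => ?_
    have hterm := pointwise_term hm hα0 (fun i => p i ω) j (H j ω)
    rw [hterm]
    have hmem : Rj j ω ∈ Finset.range (m+1) := by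
      simp only [Finset.mem_range]
      exact Nat.lt_succ_of_le (BHnum_le _)
    rw [Finset.sum_eq_single_of_mem (Rj j ω) hmem ?_]
    · by_cases hC : p j ω ≤ α * ((Rj j ω : ℕ) : ℝ) / m ∧ H j ω = true
      · simp only [hg, hC, and_true, if_pos rfl, true_and, if_true, if_pos hC]
        simp only [hRj] at hC ⊢
        rw [if_pos hC.1, one_div]
      · simp only [hg, if_neg hC]
        simp only [hRj, true_and] at hC ⊢
        rw [if_neg hC, if_neg hC, zero_div]
    · intro k _ hne
      simp only [hg]
      rw [if_neg]
      rintro ⟨h1, -⟩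
      exact hne h1.symm
  calc ∫ ω, (((BHset m α (fun j => p j ω)).filter (fun j => H j ω = true)).card : ℝ)
        / max 1 (((BHset m α (fun j => p j ω)).card : ℝ)) ∂μ
      = ∫ ω, ∑ j : Fin m, ∑ k ∈ Finset.range (m+1), g j k ω ∂μ :=
        integral_congr_ae (Filter.Eventually.of_forall hpt)
    _ = ∑ j : Fin m, ∑ k ∈ Finset.range (m+1), ∫ ω, g j k ω ∂μ := by
        rw [integral_finset_sum _
          (fun j _ => integrable_finset_sum _ (fun k _ => hgint j k))]
        exact Finset.sum_congr rfl fun j _ => integral_finset_sum _ (fun k _ => hgint j k)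
    _ ≤ ∑ _j : Fin m, α / m := Finset.sum_le_sum (fun j _ => hsumj j)
    _ = α := by
        rw [Finset.sum_const, Finset.card_univ, Fintype.card_fin, nsmul_eq_mul]
        field_simp
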